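/- Let q > 2 be a natural number, let S be the set of quadruples (a,b,c,d) of integers in {0,…,2q−1} with a − b − c + d ≡ 0 (mod 2q) and let T be the set of such quadruples with a − b − c + d ≢ 0 (mod 2q). For natural numbers x and y, consider the uniform distribution on Sˣ × Tʸ, and let N be the random variable counting the indices i (among the x + y coordinate quadruples) whose modulo-lifted quadruple satisfies (a mod q) − (b mod q) − (c mod q) + (d mod q) ≡ 0 (mod q). Then the expectation of N equals x + y/(2q−1). Equivalently, the sum of N over all elements of Sˣ × Tʸ equals (x + y/(2q−1))·(8q³)ˣ·(8q³(2q−1))ʸ. -/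

import Mathlib

open Finset


/-- The finite set of exponent chains of length 4 for circulant size `2q`:
quadruples `(a,b,c,d)` of integers with `0 ≤ a,b,c,d ≤ 2q-1`. -/
noncomputable abbrev expChains (q : ℕ) : Finset (ℤ × ℤ × ℤ × ℤ) :=
  Finset.Icc (0:ℤ) (2 * q - 1) ×ˢ Finset.Icc (0:ℤ) (2 * q - 1) ×ˢ
    Finset.Icc (0:ℤ) (2 * q - 1) ×ˢ Finset.Icc (0:ℤ) (2 * q - 1)

/-- The chain forms a cycle for circulant size `2q`. -/
abbrev isCycle (q : ℕ) (x : ℤ × ℤ × ℤ × ℤ) : Prop :=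
  (x.1 - x.2.1 - x.2.2.1 + x.2.2.2) % (2 * q) = 0

/-- The modulo-lifted chain (entries `e mod q`) forms a cycle for circulant size `q`. -/
abbrev isModCycle (q : ℕ) (x : ℤ × ℤ × ℤ × ℤ) : Prop :=
  (x.1 % q - x.2.1 % q - x.2.2.1 % q + x.2.2.2 % q) % q = 0

lemma count1 (n m v : ℤ) (hn : 0 ≤ n) (hm : 0 < m) (hd : m ∣ n) :
    (#{x ∈ Finset.Icc (0:ℤ) (n-1) | (v + x) % m = 0} : ℤ) = n / m := by
  obtain ⟨k, rfl⟩ := hd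
  have hk : 0 ≤ k := nonneg_of_mul_nonneg_right hn hm
  have hIcc : Finset.Icc (0:ℤ) (m*k-1) = Finset.Ico 0 (m*k) := by
    ext z; simp only [Finset.mem_Icc, Finset.mem_Ico]; omega
  have hpred : ∀ x : ℤ, ((v + x) % m = 0) ↔ (x ≡ -v [ZMOD m]) := by
    intro x
    rw [Int.ModEq, Int.emod_eq_emod_iff_emod_sub_eq_zero, sub_neg_eq_add, add_comm]
  rw [hIcc]
  simp_rw [hpred]
  rw [Int.Ico_filter_modEq_card 0 (m*k) hm (-v)]
  have hm' : (m:ℚ) ≠ 0 := Int.cast_ne_zero.mpr hm.ne'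
  rw [show (((m*k : ℤ):ℚ) - ((-v : ℤ):ℚ)) / ((m:ℤ):ℚ) = (v:ℚ)/(m:ℚ) + (k:ℤ) from by
    push_cast; field_simp; ring]
  rw [show ((((0:ℤ)):ℚ) - ((-v : ℤ):ℚ)) / ((m:ℤ):ℚ) = (v:ℚ)/(m:ℚ) from by push_cast; ring]
  rw [Int.ceil_add_intCast]
  rw [Int.mul_ediv_cancel_left _ hm.ne']
  omega

lemma count_chain (q : ℕ) (hq : 0 < q) (m : ℤ) (hm : 0 < m) (hd : m ∣ 2*(q:ℤ)) :
    (#{v ∈ expChains q | (v.1 - v.2.1 - v.2.2.1 + v.2.2.2) % m = 0} : ℤ)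
      = (2*(q:ℤ))^3 * (2*(q:ℤ)/m) := by
  classical
  have hn : (0:ℤ) ≤ 2*(q:ℤ) := by positivity
  have hc : ∀ v : ℤ, (#{x ∈ Finset.Icc (0:ℤ) (2*(q:ℤ)-1) | (v + x) % m = 0} : ℤ)
      = 2*(q:ℤ)/m := fun v => count1 _ m v hn hm hd
  rw [Finset.card_filter]
  push_cast
  simp only [Finset.sum_product]
  simp only [Finset.sum_boole]
  simp_rw [hc]
  simp only [Finset.sum_const, Int.card_Icc, nsmul_eq_mul]
  have : ((2*(q:ℤ) - 1 + 1 - 0).toNat : ℤ) = 2*(q:ℤ) := by omega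
  rw [this]
  ring

lemma modCycle_iff (q : ℕ) (v : ℤ × ℤ × ℤ × ℤ) :
    isModCycle q v ↔ (v.1 - v.2.1 - v.2.2.1 + v.2.2.2) % (q:ℤ) = 0 := by
  have h : (v.1 % q - v.2.1 % q - v.2.2.1 % q + v.2.2.2 % q) % (q:ℤ) =
      (v.1 - v.2.1 - v.2.2.1 + v.2.2.2) % (q:ℤ) :=
    Int.ModEq.add
      (Int.ModEq.sub
        (Int.ModEq.sub (Int.emod_emod_of_dvd _ dvd_rfl) (Int.emod_emod_of_dvd _ dvd_rfl))
        (Int.emod_emod_of_dvd _ dvd_rfl))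
      (Int.emod_emod_of_dvd _ dvd_rfl)
  unfold isModCycle
  rw [h]

lemma cycle_mod (q : ℕ) (v : ℤ × ℤ × ℤ × ℤ) (h : isCycle q v) : isModCycle q v := by
  rw [modCycle_iff]
  have h2 : (v.1 - v.2.1 - v.2.2.1 + v.2.2.2) % (q:ℤ) =
      (v.1 - v.2.1 - v.2.2.1 + v.2.2.2) % (2*(q:ℤ)) % (q:ℤ) :=
    (Int.emod_emod_of_dvd _ ⟨2, by ring⟩).symm
  rw [h2, h, Int.zero_emod]

lemma cardS (q : ℕ) (hq : 0 < q) :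
    #{v ∈ expChains q | isCycle q v} = 8*q^3 := by
  have := count_chain q hq (2*(q:ℤ)) (by positivity) dvd_rfl
  rw [Int.ediv_self (by positivity)] at this
  have h2 : ((8*q^3 : ℕ) : ℤ) = (2*(q:ℤ))^3 * 1 := by push_cast; ring
  exact_mod_cast this.trans h2.symm

lemma cardM (q : ℕ) (hq : 0 < q) :
    #{v ∈ expChains q | isModCycle q v} = 16*q^3 := by
  have heq : {v ∈ expChains q | isModCycle q v}
      = {v ∈ expChains q | (v.1 - v.2.1 - v.2.2.1 + v.2.2.2) % (q:ℤ) = 0} := by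
    apply Finset.filter_congr; intro v _; exact modCycle_iff q v
  have := count_chain q hq (q:ℤ) (by exact_mod_cast hq) ⟨2, by ring⟩
  have hdiv : 2*(q:ℤ)/(q:ℤ) = 2 := by
    rw [mul_comm, Int.mul_ediv_cancel_left _ (by exact_mod_cast hq.ne')]
  rw [hdiv] at this
  rw [heq]
  have h2 : ((16*q^3 : ℕ) : ℤ) = (2*(q:ℤ))^3 * 2 := by push_cast; ring
  exact_mod_cast this.trans h2.symm

lemma cardAll (q : ℕ) (hq : 0 < q) : #(expChains q) = 16*q^4 := by
  simp only [expChains, Finset.card_product, Int.card_Icc]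
  have : (2*(q:ℤ) - 1 + 1 - 0).toNat = 2*q := by omega
  rw [this]; ring

lemma cardT (q : ℕ) (hq : 0 < q) :
    #{v ∈ expChains q | ¬ isCycle q v} = 8*q^3*(2*q-1) := by
  have h := Finset.card_filter_add_card_filter_not (s := expChains q)
    (p := fun v => isCycle q v)
  rw [cardS q hq, cardAll q hq] at h
  have h2 : 8*q^3*(2*q-1) = 16*q^4 - 8*q^3 := by
    rw [Nat.mul_sub, mul_one]; congr 1; ring
  omega

lemma cardTM (q : ℕ) (hq : 0 < q) :
    #{v ∈ {v ∈ expChains q | ¬ isCycle q v} | isModCycle q v} = 8*q^3 := by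
  rw [Finset.filter_filter]
  have h1 : {v ∈ expChains q | ¬isCycle q v ∧ isModCycle q v}
      = {v ∈ {v ∈ expChains q | isModCycle q v} | ¬ isCycle q v} := by
    rw [Finset.filter_filter]
    apply Finset.filter_congr; intro v _; tauto
  rw [h1]
  have h := Finset.card_filter_add_card_filter_not
    (s := {v ∈ expChains q | isModCycle q v}) (p := fun v => isCycle q v)
  rw [cardM q hq] at h
  have h2 : {v ∈ {v ∈ expChains q | isModCycle q v} | isCycle q v}
      = {v ∈ expChains q | isCycle q v} := by
    rw [Finset.filter_filter]
    apply Finset.filter_congr; intro v _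
    constructor
    · exact fun hh => hh.2
    · exact fun hh => ⟨cycle_mod q v hh, hh⟩
  rw [h2, cardS q hq] at h
  omega


/-- Expected number of 4-cycles after modulo lifting: over the uniform distribution on
`Sˣ × Tʸ` (where `S` = chains forming a cycle, `T` = chains not forming a cycle),
the sum of the number `N` of coordinates whose modulo lift forms a cycle equals
`(x + y/(2q-1)) · |S|ˣ · |T|ʸ` with `|S| = 8q³`, `|T| = 8q³(2q-1)`. -/
theorem stmt_5 (q : ℕ) (hq : 2 < q) (x y : ℕ) :
    ∑ f ∈ Fintype.piFinset
        (fun _ : Fin x => (expChains q).filter (fun v => isCycle q v)),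
      ∑ g ∈ Fintype.piFinset
          (fun _ : Fin y => (expChains q).filter (fun v => ¬ isCycle q v)),
        (((Finset.univ.filter (fun i : Fin x => isModCycle q (f i))).card +
          (Finset.univ.filter (fun j : Fin y => isModCycle q (g j))).card : ℕ) : ℚ) =
      ((x : ℚ) + y / (2 * q - 1)) *
        (8 * q ^ 3 : ℚ) ^ x * (8 * q ^ 3 * (2 * q - 1) : ℚ) ^ y := by
  classical
  have hq0 : 0 < q := by omega
  set S := (expChains q).filter (fun v => isCycle q v) with hSdef
  set T := (expChains q).filter (fun v => ¬ isCycle q v) with hTdef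
  have hS : #S = 8*q^3 := cardS q hq0
  have hT : #T = 8*q^3*(2*q-1) := cardT q hq0
  have hAf : ∀ f ∈ Fintype.piFinset (fun _ : Fin x => S),
      (Finset.univ.filter (fun i : Fin x => isModCycle q (f i))) = Finset.univ := by
    intro f hf
    apply Finset.filter_true_of_mem
    intro i _
    have hm := Fintype.mem_piFinset.1 hf i
    rw [hSdef, Finset.mem_filter] at hm
    exact cycle_mod q _ hm.2
  have key : ∑ g ∈ Fintype.piFinset (fun _ : Fin y => T),
      ((Finset.univ.filter (fun j : Fin y => isModCycle q (g j))).card : ℚ)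
      = (y : ℚ) * (#T : ℚ)^(y-1) * ((8*q^3 : ℕ) : ℚ) := by
    have hrw : ∀ g : Fin y → ℤ×ℤ×ℤ×ℤ,
        ((Finset.univ.filter (fun j : Fin y => isModCycle q (g j))).card : ℚ)
        = ∑ j : Fin y, if isModCycle q (g j) then (1:ℚ) else 0 := by
      intro g; rw [Finset.card_filter]; push_cast; rfl
    simp_rw [hrw]
    rw [Finset.sum_comm]
    have happ : ∀ j : Fin y,
        ∑ g ∈ Fintype.piFinset (fun _ : Fin y => T),
          (if isModCycle q (g j) then (1:ℚ) else 0)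
        = #T ^ (y - 1) • ∑ b ∈ T, (if isModCycle q b then (1:ℚ) else 0) := by
      intro j
      have h := Fintype.sum_piFinset_apply
        (fun b => if isModCycle q b then (1:ℚ) else 0) T j
      simpa using h
    simp_rw [happ, Finset.sum_boole, hTdef]
    rw [show #{v ∈ {v ∈ expChains q | ¬ isCycle q v} | isModCycle q v} = 8*q^3
      from cardTM q hq0]
    rw [Finset.sum_const, Finset.card_univ, Fintype.card_fin, smul_smul, nsmul_eq_mul]
    push_cast
    ring
  have step1 : ∀ f ∈ Fintype.piFinset (fun _ : Fin x => S),
      ∑ g ∈ Fintype.piFinset (fun _ : Fin y => T),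
        (((Finset.univ.filter (fun i : Fin x => isModCycle q (f i))).card +
          (Finset.univ.filter (fun j : Fin y => isModCycle q (g j))).card : ℕ) : ℚ)
      = #(Fintype.piFinset (fun _ : Fin y => T)) • (x:ℚ)
          + (y : ℚ) * (#T : ℚ)^(y-1) * ((8*q^3 : ℕ) : ℚ) := by
    intro f hf
    rw [← key, ← Finset.sum_const, ← Finset.sum_add_distrib]
    apply Finset.sum_congr rfl
    intro g hg
    rw [Nat.cast_add, hAf f hf, Finset.card_univ, Fintype.card_fin]
  rw [Finset.sum_congr rfl step1, Finset.sum_const]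
  rw [Fintype.card_piFinset_const, Fintype.card_piFinset_const, hS, hT]
  simp only [nsmul_eq_mul]
  have h1 : 1 ≤ 2*q := by omega
  have hne : (2*(q:ℚ) - 1) ≠ 0 := by
    have : (3:ℚ) ≤ (q:ℚ) := by exact_mod_cast hq
    intro h; linarith
  cases y with
  | zero => push_cast [Nat.cast_sub h1]; simp; ring
  | succ y =>
    have hy : y + 1 - 1 = y := rfl
    rw [hy]
    push_cast [Nat.cast_sub h1]
    have hinv := mul_inv_cancel₀ hne
    field_simp [hne]
    linear_combination (-(8*(q:ℚ)^3) * (8*(q:ℚ)^3*(2*(q:ℚ)-1))^y * ((y:ℚ)+1)) * hinv
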